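/- Let E be a Hausdorff space in which every point is isolated except possibly two points y and z. Then every nearly continuous map f : F → E with closed graph, from any topological space F, is continuous. -/

import Mathlib

/-- A map is nearly continuous if preimages of open sets are contained
in the interior of their closures. -/
def NearlyContinuous {F E : Type*} [TopologicalSpace F] [TopologicalSpace E]
    (f : F → E) : Prop :=
  ∀ V : Set E, IsOpen V → f ⁻¹' V ⊆ interior (closure (f ⁻¹' V))

theorem closed_graph_theorem_two_nonisolated_points
    {F E : Type*} [TopologicalSpace F] [TopologicalSpace E] [T2Space E]
    (y z : E) (hiso : ∀ x : E, x ≠ y → x ≠ z → IsOpen ({x} : Set E))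
    (f : F → E)
    (hnc : NearlyContinuous f)
    (hgraph : IsClosed {q : F × E | q.2 = f q.1}) :
    Continuous f := by
  -- every fiber is closed
  have hfib : ∀ c : E, IsClosed (f ⁻¹' {c}) := by
    intro c
    have : f ⁻¹' {c} = (fun x : F => (x, c)) ⁻¹' {q : F × E | q.2 = f q.1} := by
      ext x; simp [eq_comm]
    rw [this]
    exact hgraph.preimage (continuous_id.prodMk continuous_const)
  -- fibers over isolated points are open
  have hfibopen : ∀ c : E, IsOpen ({c} : Set E) → IsOpen (f ⁻¹' {c}) := by
    intro c hc
    have h := hnc {c} hc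
    rw [(hfib c).closure_eq] at h
    have : interior (f ⁻¹' {c}) = f ⁻¹' {c} := Set.Subset.antisymm interior_subset h
    rw [← this]; exact isOpen_interior
  rw [continuous_iff_continuousAt]
  intro a
  rw [continuousAt_def]
  intro A hA
  obtain ⟨V, hVA, hVopen, hfaV⟩ := mem_nhds_iff.mp hA
  refine Filter.mem_of_superset ?_ (Set.preimage_mono hVA)
  -- the bad closed set to remove
  have hBclosed : IsClosed (f ⁻¹' (({y, z} : Set E) \ V)) := by
    rw [← Set.biUnion_preimage_singleton]
    exact Set.Finite.isClosed_biUnion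
      (((Set.finite_singleton z).insert y).diff) (fun c _ => hfib c)
  set W := interior (closure (f ⁻¹' V)) \ f ⁻¹' (({y, z} : Set E) \ V) with hW
  have hWopen : IsOpen W := isOpen_interior.sdiff hBclosed
  have haW : a ∈ W := by
    constructor
    · exact hnc V hVopen hfaV
    · intro h
      exact h.2 hfaV
  have hWsub : W ⊆ f ⁻¹' V := by
    intro x hx
    by_contra hxV
    have hfx : f x ∉ ({y, z} : Set E) := fun h => hx.2 ⟨h, hxV⟩
    have hne_y : f x ≠ y := fun h => hfx (by simp [h])
    have hne_z : f x ≠ z := fun h => hfx (by simp [h])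
    have hUopen : IsOpen (f ⁻¹' {f x}) := hfibopen _ (hiso _ hne_y hne_z)
    have hxcl : x ∈ closure (f ⁻¹' V) := interior_subset hx.1
    obtain ⟨u, huU, huV⟩ := mem_closure_iff.mp hxcl _ hUopen rfl
    rw [Set.mem_preimage, Set.mem_singleton_iff] at huU
    exact hxV (show f x ∈ V from huU ▸ huV)
    -- done (Set.mem_preimage.mp (huU ▸ huV))
  exact mem_nhds_iff.mpr ⟨W, hWsub, hWopen, haW⟩
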